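/- arXiv:1803.04673 — 3 statements merged into one kernel-verified Lean document; each statement's English description precedes it below -/
import Mathlib

section
/- Assume U is nonempty and there exists x̄ ∈ X with p(x̄) ∈ ℝ (i.e., dom p ≠ ∅). Then for each x* ∈ X* the following statements are equivalent: (i) p*(x*) = q(x*) (robust duality holds at x*); (ii) for every ε ≥ 0, (M^ε p)(x*) = 𝒜^ε(x*); (iii) there exists ε̄ > 0 such that (M^ε p)(x*) = 𝒜^ε(x*) for all ε ∈ (0, ε̄). -/
noncomputable section

set_option linter.unusedSectionVars false
set_option maxHeartbeats 1000000
namespace RobustDuality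

/-- The set of `ε`-minimizers of an extended-real-valued function `h`:
`{z | h z ∈ ℝ ∧ h z ≤ inf h + ε}` (empty when `inf h ∉ ℝ`). -/
def epsArgmin {Z : Type*} (h : Z → EReal) (ε : ℝ) : Set Z :=
  {z | (∃ r : ℝ, h z = (r : EReal)) ∧ h z ≤ (⨅ w, h w) + (ε : EReal)}

variable {X : Type*} [AddCommGroup X] [Module ℝ X] [TopologicalSpace X]
  [IsTopologicalAddGroup X] [ContinuousSMul ℝ X] [LocallyConvexSpace ℝ X] [T2Space X]

/-- `(M^ε h)(x*) := ε-argmin (h - x*)` for `h : X → EReal` and `x* ∈ X*`. -/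
def M1 (h : X → EReal) (ε : ℝ) (xs : X →L[ℝ] ℝ) : Set X :=
  epsArgmin (fun x => h x - ((xs x : ℝ) : EReal)) ε

/-- Fenchel conjugate of `h : X → EReal`. -/
def conj1 (h : X → EReal) (xs : X →L[ℝ] ℝ) : EReal :=
  ⨆ x : X, ((xs x : ℝ) : EReal) - h x

/-- `ε`-subdifferential of `h : X → EReal` at `a`. -/
def epsSubdiff1 (h : X → EReal) (ε : ℝ) (a : X) : Set (X →L[ℝ] ℝ) :=
  {xs | (∃ r : ℝ, h a = (r : EReal)) ∧
    ∀ x, h a + ((xs x - xs a - ε : ℝ) : EReal) ≤ h x}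

section Pair

variable {Yu : Type*} [AddCommGroup Yu] [Module ℝ Yu] [TopologicalSpace Yu]
  [IsTopologicalAddGroup Yu] [ContinuousSMul ℝ Yu] [LocallyConvexSpace ℝ Yu] [T2Space Yu]

/-- Fenchel conjugate of `F : X × Y → EReal` at `(x*, y*)`. -/
def conj2 (F : X × Yu → EReal) (xs : X →L[ℝ] ℝ) (ys : Yu →L[ℝ] ℝ) : EReal :=
  ⨆ z : X × Yu, ((xs z.1 + ys z.2 : ℝ) : EReal) - F z

/-- `(M^ε F)(x*, y*) := ε-argmin (F - (x*, y*))`. -/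
def M2 (F : X × Yu → EReal) (ε : ℝ) (xs : X →L[ℝ] ℝ) (ys : Yu →L[ℝ] ℝ) : Set (X × Yu) :=
  epsArgmin (fun z => F z - ((xs z.1 + ys z.2 : ℝ) : EReal)) ε

/-- `ε`-subdifferential of `F : X × Y → EReal` at `a`, as a set of dual pairs. -/
def epsSubdiff2 (F : X × Yu → EReal) (ε : ℝ) (a : X × Yu) :
    Set ((X →L[ℝ] ℝ) × (Yu →L[ℝ] ℝ)) :=
  {zs | (∃ r : ℝ, F a = (r : EReal)) ∧
    ∀ z, F a + ((zs.1 z.1 + zs.2 z.2 - zs.1 a.1 - zs.2 a.2 - ε : ℝ) : EReal) ≤ F z}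

end Pair


section MainProof

lemma aux_neg_iSup {ι : Sort*} (f : ι → EReal) : -(⨆ i, f i) = ⨅ i, -f i := by
  refine le_antisymm (le_iInf fun i => EReal.neg_le_neg_iff.2 (le_iSup f i)) ?_
  exact EReal.le_neg_of_le_neg (iSup_le fun i =>
    EReal.le_neg_of_le_neg (iInf_le (fun i => -f i) i))

lemma aux_neg_coe_sub (c : ℝ) (a : EReal) : -((c : EReal) - a) = a - (c : EReal) := by
  rw [EReal.neg_sub (Or.inl (by simp)) (Or.inl (by simp)), add_comm, ← sub_eq_add_neg]

lemma aux_iInf_sub_lin {Z : Sort*} (h : Z → EReal) (l : Z → ℝ) :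
    (⨅ z, h z - ((l z : ℝ) : EReal)) = -(⨆ z, ((l z : ℝ) : EReal) - h z) := by
  rw [aux_neg_iSup]
  exact iInf_congr fun z => (aux_neg_coe_sub _ _).symm

lemma aux_exists_real_sub_coe {a : EReal} {c : ℝ} :
    (∃ r : ℝ, a - (c : EReal) = (r : EReal)) ↔ ∃ r : ℝ, a = (r : EReal) := by
  induction a using EReal.rec with
  | bot => simp [EReal.bot_sub, eq_comm]
  | coe x => exact ⟨fun _ => ⟨x, rfl⟩, fun _ => ⟨x - c, by norm_cast⟩⟩
  | top => simp [EReal.top_sub_coe, eq_comm]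

lemma aux_coe_not_le_bot (r : ℝ) : ¬((r : EReal) ≤ ⊥) := fun h =>
  EReal.coe_ne_bot r (le_bot_iff.1 h)

lemma aux_le_of_forall_add_le {a b : EReal} {e : ℝ} (he : 0 < e)
    (h : ∀ ε : ℝ, 0 < ε → ε < e → a ≤ b + (ε : EReal)) : a ≤ b := by
  induction b using EReal.rec with
  | bot =>
    have h2 := h (e / 2) (by linarith) (by linarith)
    rw [EReal.bot_add] at h2
    exact h2.trans bot_le
  | coe c =>
    induction a using EReal.rec with
    | bot => exact bot_le
    | coe d =>
      norm_cast
      by_contra hlt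
      push_neg at hlt
      have hδ : 0 < min (e / 2) ((d - c) / 2) := by
        apply lt_min (by linarith) (by linarith)
      have h2 := h _ hδ (lt_of_le_of_lt (min_le_left _ _) (by linarith))
      have h3 : d ≤ c + min (e / 2) ((d - c) / 2) := by exact_mod_cast h2
      have h4 : min (e / 2) ((d - c) / 2) ≤ (d - c) / 2 := min_le_right _ _
      linarith
    | top =>
      have h2 := h (e / 2) (by linarith) (by linarith)
      rw [← EReal.coe_add, top_le_iff] at h2
      exact absurd h2 (EReal.coe_ne_top _)
  | top => exact le_top

end MainProof

variable {U : Type*} {Y : U → Type*} [∀ u, AddCommGroup (Y u)] [∀ u, Module ℝ (Y u)]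
  [∀ u, TopologicalSpace (Y u)] [∀ u, IsTopologicalAddGroup (Y u)]
  [∀ u, ContinuousSMul ℝ (Y u)] [∀ u, LocallyConvexSpace ℝ (Y u)] [∀ u, T2Space (Y u)]

/-- The robust objective `p := sup_{u ∈ U} F_u (·, 0_u)`. -/
def pRob (F : ∀ u, X × Y u → EReal) (x : X) : EReal := ⨆ u, F u (x, 0)

/-- `q := inf over u ∈ U and y* ∈ Y_u* of F_u*(·, y*)`. -/
def qRob (F : ∀ u, X × Y u → EReal) (xs : X →L[ℝ] ℝ) : EReal :=
  ⨅ (u : U) (ys : Y u →L[ℝ] ℝ), conj2 (F u) xs ys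

/-- `S^ε(x*) := {x : p x ∈ ℝ ∧ p x - ⟨x*, x⟩ ≤ -q x* + ε}`. -/
def Sset (F : ∀ u, X × Y u → EReal) (ε : ℝ) (xs : X →L[ℝ] ℝ) : Set X :=
  {x | (∃ r : ℝ, pRob F x = (r : EReal)) ∧
    pRob F x - ((xs x : ℝ) : EReal) ≤ -qRob F xs + (ε : EReal)}

/-- `J^ε(u) := {x : p x ∈ ℝ ∧ p x ≤ F_u(x, 0) + ε}`. -/
def Jset (F : ∀ u, X × Y u → EReal) (ε : ℝ) (u : U) : Set X :=
  {x | (∃ r : ℝ, pRob F x = (r : EReal)) ∧ pRob F x ≤ F u (x, 0) + (ε : EReal)}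

/-- `A^{(ε₁,ε₂)}_{(u,y*)}(x*) := {x ∈ J^{ε₁}(u) : (x, 0) ∈ (M^{ε₂}F_u)(x*, y*)}`. -/
def Aset (F : ∀ u, X × Y u → EReal) (ε₁ ε₂ : ℝ) (u : U) (ys : Y u →L[ℝ] ℝ)
    (xs : X →L[ℝ] ℝ) : Set X :=
  {x | x ∈ Jset F ε₁ u ∧ (x, (0 : Y u)) ∈ M2 (F u) ε₂ xs ys}

/-- `𝒜^ε(x*)`. -/
def calA (F : ∀ u, X × Y u → EReal) (ε : ℝ) (xs : X →L[ℝ] ℝ) : Set X :=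
  ⋂ (η : ℝ) (_ : 0 < η),
    ⋃ (u : U) (ys : Y u →L[ℝ] ℝ) (ε₁ : ℝ) (ε₂ : ℝ)
      (_ : 0 ≤ ε₁) (_ : 0 ≤ ε₂) (_ : ε₁ + ε₂ = ε + η), Aset F ε₁ ε₂ u ys xs

/-- `B^ε_{(u,y*)}(x*)`. -/
def Bset (F : ∀ u, X × Y u → EReal) (ε : ℝ) (u : U) (ys : Y u →L[ℝ] ℝ)
    (xs : X →L[ℝ] ℝ) : Set X :=
  ⋃ (ε₁ : ℝ) (ε₂ : ℝ) (_ : 0 ≤ ε₁) (_ : 0 ≤ ε₂) (_ : ε₁ + ε₂ = ε),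
    Aset F ε₁ ε₂ u ys xs

/-- `B^ε(x*) := ⋃_{u, y*} B^ε_{(u,y*)}(x*)`. -/
def BsetAll (F : ∀ u, X × Y u → EReal) (ε : ℝ) (xs : X →L[ℝ] ℝ) : Set X :=
  ⋃ (u : U) (ys : Y u →L[ℝ] ℝ), Bset F ε u ys xs

/-- `I^ε(x)`: the set of `ε`-active indices at `x`. -/
def Iset (F : ∀ u, X × Y u → EReal) (ε : ℝ) (x : X) : Set U :=
  {u | (∃ r : ℝ, pRob F x = (r : EReal)) ∧ pRob F x - (ε : EReal) ≤ F u (x, 0)}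

/-- `C^ε(x)`. -/
def Cset (F : ∀ u, X × Y u → EReal) (ε : ℝ) (x : X) : Set (X →L[ℝ] ℝ) :=
  ⋂ (η : ℝ) (_ : 0 < η),
    ⋃ (ε₁ : ℝ) (ε₂ : ℝ) (_ : 0 ≤ ε₁) (_ : 0 ≤ ε₂) (_ : ε₁ + ε₂ = ε + η)
      (u : U) (_ : u ∈ Iset F ε₁ x),
      Prod.fst '' epsSubdiff2 (F u) ε₂ (x, (0 : Y u))

/-- `D^ε(x)`. -/
def Dset (F : ∀ u, X × Y u → EReal) (ε : ℝ) (x : X) : Set (X →L[ℝ] ℝ) :=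
  ⋃ (ε₁ : ℝ) (ε₂ : ℝ) (_ : 0 ≤ ε₁) (_ : 0 ≤ ε₂) (_ : ε₁ + ε₂ = ε)
    (u : U) (_ : u ∈ Iset F ε₁ x),
    Prod.fst '' epsSubdiff2 (F u) ε₂ (x, (0 : Y u))

/-- The exact active index set `I(x) := {u : F_u(x,0) = p(x)}` (when `p(x) ∈ ℝ`). -/
def I0set (F : ∀ u, X × Y u → EReal) (x : X) : Set U :=
  {u | (∃ r : ℝ, pRob F x = (r : EReal)) ∧ F u (x, 0) = pRob F x}

/-- `D(x) := ⋃_{u ∈ I(x)} proj_{X*} ∂F_u(x, 0)`. -/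
def D0set (F : ∀ u, X × Y u → EReal) (x : X) : Set (X →L[ℝ] ℝ) :=
  ⋃ (u : U) (_ : u ∈ I0set F x), Prod.fst '' epsSubdiff2 (F u) 0 (x, (0 : Y u))

/-- `B_{(u,y*)}(x*) := {x ∈ J(u) : (x, 0) ∈ (M F_u)(x*, y*)}`. -/
def B0set (F : ∀ u, X × Y u → EReal) (u : U) (ys : Y u →L[ℝ] ℝ)
    (xs : X →L[ℝ] ℝ) : Set X :=
  {x | (∃ r : ℝ, pRob F x = (r : EReal)) ∧ F u (x, 0) = pRob F x ∧
    (x, (0 : Y u)) ∈ M2 (F u) 0 xs ys}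


section MainLemmas

variable (F : ∀ u, X × Y u → EReal) (xs : X →L[ℝ] ℝ)

lemma mem_M1_iff {h : X → EReal} {ε : ℝ} {x : X} :
    x ∈ M1 h ε xs ↔ (∃ r : ℝ, h x = (r : EReal)) ∧
      h x - ((xs x : ℝ) : EReal) ≤ -conj1 h xs + (ε : EReal) := by
  simp only [M1, epsArgmin, Set.mem_setOf_eq, aux_exists_real_sub_coe]
  rw [show (⨅ w, h w - ((xs w : ℝ) : EReal)) = -conj1 h xs from
    aux_iInf_sub_lin h (fun w => xs w)]

lemma mem_M2_iff {u : U} {ε : ℝ} {ys : Y u →L[ℝ] ℝ} {x : X} {y : Y u} :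
    (x, y) ∈ M2 (F u) ε xs ys ↔ (∃ r : ℝ, F u (x, y) = (r : EReal)) ∧
      F u (x, y) - ((xs x + ys y : ℝ) : EReal) ≤ -conj2 (F u) xs ys + (ε : EReal) := by
  simp only [M2, epsArgmin, Set.mem_setOf_eq, aux_exists_real_sub_coe]
  rw [show (⨅ w : X × Y u, F u w - ((xs w.1 + ys w.2 : ℝ) : EReal)) = -conj2 (F u) xs ys from
    aux_iInf_sub_lin (F u) (fun w => xs w.1 + ys w.2)]

lemma F_le_pRob (u : U) (x : X) : F u (x, 0) ≤ pRob F x :=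
  le_iSup (fun u => F u (x, 0)) u

lemma conj2_FY (u : U) (ys : Y u →L[ℝ] ℝ) (x : X) (y : Y u) :
    ((xs x + ys y : ℝ) : EReal) - F u (x, y) ≤ conj2 (F u) xs ys :=
  le_iSup (fun z : X × Y u => ((xs z.1 + ys z.2 : ℝ) : EReal) - F u z) (x, y)

lemma weak_duality : conj1 (pRob F) xs ≤ qRob F xs := by
  refine le_iInf fun u => le_iInf fun ys => iSup_le fun x => ?_
  calc ((xs x : ℝ) : EReal) - pRob F x
      ≤ ((xs x + ys 0 : ℝ) : EReal) - F u (x, 0) := by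
        rw [map_zero, add_zero]
        exact EReal.sub_le_sub (le_refl _) (F_le_pRob F u x)
    _ ≤ conj2 (F u) xs ys := conj2_FY F xs u ys x 0

lemma calA_subset_S (ε : ℝ) : calA F ε xs ⊆ Sset F ε xs := by
  intro x hx
  simp only [calA, Set.mem_iInter, Set.mem_iUnion] at hx
  obtain ⟨u₀, ys₀, e₁, e₂, he₁, he₂, hsum₀, hA₀⟩ := hx 1 one_pos
  refine ⟨hA₀.1.1, ?_⟩
  refine aux_le_of_forall_add_le one_pos fun η hη _ => ?_
  obtain ⟨u, ys, ε₁, ε₂, hε₁, hε₂, hsum, hA⟩ := hx η hη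
  obtain ⟨⟨⟨r, hr⟩, hle1⟩, hM⟩ := hA
  obtain ⟨⟨s, hs⟩, hle2⟩ := (mem_M2_iff F xs).1 hM
  have hFY := conj2_FY F xs u ys x 0
  rw [hs, ← EReal.coe_sub] at hFY
  have hcbot : conj2 (F u) xs ys ≠ ⊥ := fun hb => aux_coe_not_le_bot _ (hb ▸ hFY)
  have hctop : conj2 (F u) xs ys ≠ ⊤ := by
    intro htop
    rw [hs, htop] at hle2
    rw [show -(⊤ : EReal) + (ε₂ : EReal) = ⊥ by
      rw [EReal.neg_top, EReal.bot_add]] at hle2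
    rw [← EReal.coe_sub] at hle2
    exact aux_coe_not_le_bot _ hle2
  obtain ⟨t, ht⟩ : ∃ t : ℝ, conj2 (F u) xs ys = (t : EReal) :=
    ⟨(conj2 (F u) xs ys).toReal, (EReal.coe_toReal hctop hcbot).symm⟩
  have hqt0 : (⨅ (u' : U) (ys' : Y u' →L[ℝ] ℝ), conj2 (F u') xs ys') ≤ conj2 (F u) xs ys :=
    (iInf_le _ u).trans (iInf_le (fun ys' : Y u →L[ℝ] ℝ => conj2 (F u) xs ys') ys)
  have hqt : qRob F xs ≤ (t : EReal) := by
    rw [← ht]; exact hqt0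
  rw [hr, hs] at hle1
  rw [hs, ht] at hle2
  have h1 : r ≤ s + ε₁ := by exact_mod_cast hle1
  have h2 : s - (xs x + ys 0) ≤ -t + ε₂ := by exact_mod_cast hle2
  rw [map_zero] at h2
  have hkey : r - xs x ≤ -t + ε + η := by
    have := hsum; linarith
  calc pRob F x - ((xs x : ℝ) : EReal) = ((r - xs x : ℝ) : EReal) := by
        rw [hr, ← EReal.coe_sub]
    _ ≤ ((-t + ε + η : ℝ) : EReal) := EReal.coe_le_coe_iff.2 hkey
    _ = -(t : EReal) + (ε : EReal) + (η : EReal) := by push_cast; ring_nf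
    _ ≤ -qRob F xs + (ε : EReal) + (η : EReal) := by
        exact add_le_add_left (add_le_add_left (EReal.neg_le_neg_iff.2 hqt) _) _
    _ = -qRob F xs + (ε : EReal) + (η : EReal) := rfl

lemma S_subset_calA (hF : ∀ u z, F u z ≠ ⊥) {t₀ : ℝ} (ht₀ : qRob F xs = (t₀ : EReal))
    {ε : ℝ} (hε : 0 ≤ ε) : Sset F ε xs ⊆ calA F ε xs := by
  rintro x ⟨⟨r, hr⟩, hle⟩
  have hle' : r - xs x ≤ -t₀ + ε := by
    rw [hr, ht₀, ← EReal.coe_sub, ← EReal.coe_neg, ← EReal.coe_add] at hle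
    exact_mod_cast hle
  simp only [calA, Set.mem_iInter, Set.mem_iUnion]
  intro η hη
  have hqlt : (⨅ (u : U) (ys : Y u →L[ℝ] ℝ), conj2 (F u) xs ys) < ((t₀ + η / 2 : ℝ) : EReal) := by
    rw [show (⨅ (u : U) (ys : Y u →L[ℝ] ℝ), conj2 (F u) xs ys) = qRob F xs from rfl, ht₀]
    exact_mod_cast (by linarith : t₀ < t₀ + η / 2)
  obtain ⟨u, hu⟩ := iInf_lt_iff.1 hqlt
  obtain ⟨ys, hys⟩ := iInf_lt_iff.1 hu
  -- F u (x,0) is real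
  have hFub : F u (x, 0) ≠ ⊥ := hF u (x, 0)
  have hFle : F u (x, 0) ≤ ((r : ℝ) : EReal) := by
    rw [← hr]; exact F_le_pRob F u x
  have hFut : F u (x, 0) ≠ ⊤ := fun h => by
    rw [h, top_le_iff] at hFle; exact EReal.coe_ne_top _ hFle
  obtain ⟨s, hs⟩ : ∃ s : ℝ, F u (x, 0) = (s : EReal) :=
    ⟨(F u (x, 0)).toReal, (EReal.coe_toReal hFut hFub).symm⟩
  -- conj2 is real
  have hFY := conj2_FY F xs u ys x 0
  rw [hs, ← EReal.coe_sub] at hFY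
  have hcbot : conj2 (F u) xs ys ≠ ⊥ := fun hb => aux_coe_not_le_bot _ (hb ▸ hFY)
  have hctop : conj2 (F u) xs ys ≠ ⊤ := fun h => absurd (h ▸ hys) (by simp)
  obtain ⟨t, ht⟩ : ∃ t : ℝ, conj2 (F u) xs ys = (t : EReal) :=
    ⟨(conj2 (F u) xs ys).toReal, (EReal.coe_toReal hctop hcbot).symm⟩
  have htlt : t < t₀ + η / 2 := by rw [ht] at hys; exact_mod_cast hys
  have hFY' : xs x + ys 0 - s ≤ t := by rw [ht] at hFY; exact_mod_cast hFY
  rw [map_zero, add_zero] at hFY'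
  have hsr : s ≤ r := by
    rw [hs] at hFle; exact_mod_cast hFle
  refine ⟨u, ys, r - s, ε + η - (r - s), by linarith, by linarith, by ring, ?_, ?_⟩
  · exact ⟨⟨r, hr⟩, by rw [hr, hs, ← EReal.coe_add]; exact_mod_cast (by linarith : r ≤ s + (r - s))⟩
  · refine (mem_M2_iff F xs).2 ⟨⟨s, hs⟩, ?_⟩
    rw [hs, ht, ← EReal.coe_sub, ← EReal.coe_neg, ← EReal.coe_add]
    rw [map_zero]
    exact_mod_cast (by linarith : s - (xs x + 0) ≤ -t + (ε + η - (r - s)))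

lemma M1_eq_Sset (hq : conj1 (pRob F) xs = qRob F xs) (ε : ℝ) :
    M1 (pRob F) ε xs = Sset F ε xs := by
  ext x
  rw [mem_M1_iff, hq]
  simp only [Sset, Set.mem_setOf_eq]

lemma Sset_empty_of_q_top (hq : qRob F xs = ⊤) (ε : ℝ) : Sset F ε xs = ∅ := by
  ext x
  simp only [Sset, Set.mem_setOf_eq, Set.mem_empty_iff_false, iff_false, not_and]
  rintro ⟨r, hr⟩ hle
  rw [hq, hr, ← EReal.coe_sub] at hle
  rw [show -(⊤ : EReal) + (ε : EReal) = ⊥ by rw [EReal.neg_top, EReal.bot_add]] at hle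
  exact aux_coe_not_le_bot _ hle

lemma pRob_ne_bot (hU : Nonempty U) (hF : ∀ u z, F u z ≠ ⊥) (x : X) : pRob F x ≠ ⊥ := by
  obtain ⟨u⟩ := hU
  intro h
  have h2 := F_le_pRob F u x
  rw [h, le_bot_iff] at h2
  exact hF u (x, 0) h2

end MainLemmas

/-- Theorem 3.1 (robust duality): `p*(x*) = q(x*)` iff `(M^ε p)(x*) = 𝒜^ε(x*)`. -/
theorem robust_duality_iff_M_eq_calA
    (F : ∀ u, X × Y u → EReal) (hU : Nonempty U) (hF : ∀ u z, F u z ≠ ⊥)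
    (hdomp : ∃ xbar : X, ∃ r : ℝ, pRob F xbar = (r : EReal)) (xs : X →L[ℝ] ℝ) :
    List.TFAE
      [conj1 (pRob F) xs = qRob F xs,
       ∀ ε : ℝ, 0 ≤ ε → M1 (pRob F) ε xs = calA F ε xs,
       ∃ εbar : ℝ, 0 < εbar ∧
         ∀ ε : ℝ, 0 < ε → ε < εbar → M1 (pRob F) ε xs = calA F ε xs] := by
  obtain ⟨xbar, rbar, hbar⟩ := hdomp
  have hconj_ne_bot : conj1 (pRob F) xs ≠ ⊥ := by
    intro hb
    have h1 : ((xs xbar : ℝ) : EReal) - pRob F xbar ≤ conj1 (pRob F) xs :=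
      le_iSup (fun x => ((xs x : ℝ) : EReal) - pRob F x) xbar
    rw [hbar, ← EReal.coe_sub, hb] at h1
    exact aux_coe_not_le_bot _ h1
  have hweak := weak_duality F xs
  have hq_ne_bot : qRob F xs ≠ ⊥ := fun hb => hconj_ne_bot (le_bot_iff.1 (hb ▸ hweak))
  have hinf : (⨅ w, pRob F w - ((xs w : ℝ) : EReal)) = -conj1 (pRob F) xs :=
    aux_iInf_sub_lin (pRob F) fun w => xs w
  tfae_have 1 → 2 := by
    intro h1 ε hε
    rw [M1_eq_Sset F xs h1 ε]
    by_cases htop : qRob F xs = ⊤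
    · rw [Sset_empty_of_q_top F xs htop ε]
      symm
      rw [← Set.subset_empty_iff, ← Sset_empty_of_q_top F xs htop ε]
      exact calA_subset_S F xs ε
    · obtain ⟨t₀, ht₀⟩ : ∃ t₀ : ℝ, qRob F xs = (t₀ : EReal) :=
        ⟨(qRob F xs).toReal, (EReal.coe_toReal htop hq_ne_bot).symm⟩
      exact Set.Subset.antisymm (S_subset_calA F xs hF ht₀ hε) (calA_subset_S F xs ε)
  tfae_have 2 → 3 := fun h2 => ⟨1, one_pos, fun ε hε _ => h2 ε hε.le⟩
  tfae_have 3 → 1 := by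
    rintro ⟨εbar, hεbar, h3⟩
    refine le_antisymm hweak ?_
    by_cases htop : conj1 (pRob F) xs = ⊤
    · rw [htop]; exact le_top
    obtain ⟨c, hc⟩ : ∃ c : ℝ, conj1 (pRob F) xs = (c : EReal) :=
      ⟨(conj1 (pRob F) xs).toReal, (EReal.coe_toReal htop hconj_ne_bot).symm⟩
    refine aux_le_of_forall_add_le hεbar fun ε hε hεlt => ?_
    have hlt : (⨅ w, pRob F w - ((xs w : ℝ) : EReal)) < -conj1 (pRob F) xs + (ε : EReal) := by
      rw [hinf, hc, ← EReal.coe_neg, ← EReal.coe_add]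
      exact_mod_cast (by linarith : -c < -c + ε)
    obtain ⟨x, hx⟩ := iInf_lt_iff.1 hlt
    have hpb : pRob F x ≠ ⊥ := pRob_ne_bot F hU hF x
    have hpt : pRob F x ≠ ⊤ := by
      intro h
      rw [h, EReal.top_sub_coe] at hx
      exact not_top_lt hx
    obtain ⟨r, hr⟩ : ∃ r : ℝ, pRob F x = (r : EReal) :=
      ⟨(pRob F x).toReal, (EReal.coe_toReal hpt hpb).symm⟩
    have hxM : x ∈ M1 (pRob F) ε xs := by
      refine ⟨⟨r - xs x, by
        show pRob F x - ((xs x : ℝ) : EReal) = ((r - xs x : ℝ) : EReal)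
        rw [hr, ← EReal.coe_sub]⟩, ?_⟩
      show pRob F x - ((xs x : ℝ) : EReal) ≤ (⨅ w, pRob F w - ((xs w : ℝ) : EReal)) + (ε : EReal)
      refine le_trans hx.le ?_
      rw [hinf]
    have hxA : x ∈ calA F ε xs := by rw [← h3 ε hε hεlt]; exact hxM
    obtain ⟨_, hle⟩ := calA_subset_S F xs ε hxA
    have hlow : -conj1 (pRob F) xs ≤ pRob F x - ((xs x : ℝ) : EReal) := by
      rw [← hinf]; exact iInf_le _ x
    have hcomb : -conj1 (pRob F) xs ≤ -qRob F xs + (ε : EReal) := le_trans hlow hle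
    by_cases hqt : qRob F xs = ⊤
    · rw [hqt, show -(⊤ : EReal) + (ε : EReal) = ⊥ by rw [EReal.neg_top, EReal.bot_add],
        hc, ← EReal.coe_neg] at hcomb
      exact absurd hcomb (aux_coe_not_le_bot _)
    · obtain ⟨tq, htq⟩ : ∃ tq : ℝ, qRob F xs = (tq : EReal) :=
        ⟨(qRob F xs).toReal, (EReal.coe_toReal hqt hq_ne_bot).symm⟩
      rw [hc, htq, ← EReal.coe_neg, ← EReal.coe_neg, ← EReal.coe_add] at hcomb
      rw [htq, hc, ← EReal.coe_add]
      have hcr : -c ≤ -tq + ε := by exact_mod_cast hcomb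
      exact_mod_cast (by linarith : tq ≤ c + ε)
  tfae_finish

end RobustDuality
end
end

section
/- Let (f_u)_{u∈U} be a family of functions f_u : X → ℝ ∪ {+∞} with U nonempty, let p := sup_{u∈U} f_u with dom p ≠ ∅, and let x* ∈ X*. Then the formula (sup_{u∈U} f_u)*(x*) = min_{u∈U} f_u*(x*) (with the infimum attained) holds if and only if there exists u ∈ U such that (M^ε p)(x*) = B^ε_u(x*) for all ε ≥ 0, and also if and only if there exist ε̄ > 0 and u ∈ U such that (M^ε p)(x*) = B^ε_u(x*) for all ε ∈ (0, ε̄), where B^ε_u(x*) := ⋃_{ε₁,ε₂≥0, ε₁+ε₂=ε} (J^{ε₁}(u) ∩ (M^{ε₂}f_u)(x*)) and J^{ε₁}(u) := {x ∈ X : p(x) ∈ ℝ and f_u(x) ≥ p(x) − ε₁}. -/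
noncomputable section

namespace RobustDuality

set_option linter.unusedSectionVars false

private lemma ereal_eq_of_sub_coe {a : EReal} {b r : ℝ} (h : a - (b:EReal) = (r:EReal)) :
    a = ((r + b : ℝ) : EReal) := by
  induction a with
  | bot => simp at h
  | coe x => rw [← EReal.coe_sub] at h; norm_cast at h ⊢; linarith
  | top => simp at h

private lemma ereal_neg_iInf {ι : Sort*} (g : ι → EReal) : -(⨅ i, g i) = ⨆ i, -(g i) := by
  apply le_antisymm
  · rw [EReal.neg_le]
    exact le_iInf fun i => EReal.neg_le.mp (le_iSup (fun i => -(g i)) i)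
  · exact iSup_le fun i => EReal.neg_le_neg_iff.mpr (iInf_le _ i)

private lemma ereal_neg_iSup {ι : Sort*} (g : ι → EReal) : -(⨆ i, g i) = ⨅ i, -(g i) := by
  have := ereal_neg_iInf (fun i => -(g i))
  simp only [neg_neg] at this
  rw [← this, neg_neg]

private lemma ereal_real_of {a : EReal} (hb : a ≠ ⊥) (ht : a ≠ ⊤) : ∃ r : ℝ, a = (r:EReal) := by
  induction a with
  | bot => exact absurd rfl hb
  | coe x => exact ⟨x, rfl⟩
  | top => exact absurd rfl ht

private lemma ereal_sub_coe_ne_bot {a : EReal} (hb : a ≠ ⊥) (b : ℝ) : a - (b:EReal) ≠ ⊥ := by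
  induction a with
  | bot => exact absurd rfl hb
  | coe x => rw [← EReal.coe_sub]; exact EReal.coe_ne_bot _
  | top => simp

private lemma ereal_coe_sub_le {a : EReal} {r s : ℝ} (h : (r:EReal) ≤ a + (s:EReal)) :
    ((r - s : ℝ):EReal) ≤ a := by
  induction a with
  | bot => simp only [EReal.bot_add, le_bot_iff] at h; exact absurd h (EReal.coe_ne_bot _)
  | coe x => rw [← EReal.coe_add] at h; norm_cast at h ⊢; linarith
  | top => exact le_top

private lemma ereal_iInf_sub {Z : Type*} (h : Z → EReal) (l : Z → ℝ) :
    (⨅ x, h x - ((l x : ℝ):EReal)) = -(⨆ x, ((l x : ℝ):EReal) - h x) := by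
  rw [ereal_neg_iSup]
  exact iInf_congr fun x => by
    rw [EReal.neg_sub (Or.inl (EReal.coe_ne_bot _)) (Or.inl (EReal.coe_ne_top _)),
      sub_eq_add_neg, add_comm]

variable {X : Type*} [AddCommGroup X] [Module ℝ X] [TopologicalSpace X]
  [IsTopologicalAddGroup X] [ContinuousSMul ℝ X] [LocallyConvexSpace ℝ X] [T2Space X]

variable {U : Type*}

/-- `p := sup_{u ∈ U} f_u`. -/
def pSup (f : U → X → EReal) (x : X) : EReal := ⨆ u, f u x

/-- `J^ε(u) := {x : p x ∈ ℝ ∧ f_u x ≥ p x - ε}`. -/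
def J2set (f : U → X → EReal) (ε : ℝ) (u : U) : Set X :=
  {x | (∃ r : ℝ, pSup f x = (r : EReal)) ∧ pSup f x - (ε : EReal) ≤ f u x}

/-- `𝒜^ε(x*)` for the non-perturbation case. -/
def calA2 (f : U → X → EReal) (ε : ℝ) (xs : X →L[ℝ] ℝ) : Set X :=
  ⋂ (η : ℝ) (_ : 0 < η),
    ⋃ (u : U) (ε₁ : ℝ) (ε₂ : ℝ) (_ : 0 ≤ ε₁) (_ : 0 ≤ ε₂) (_ : ε₁ + ε₂ = ε + η),
      J2set f ε₁ u ∩ M1 (f u) ε₂ xs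

/-- `B^ε_u(x*)` for the non-perturbation case. -/
def B2set (f : U → X → EReal) (ε : ℝ) (u : U) (xs : X →L[ℝ] ℝ) : Set X :=
  ⋃ (ε₁ : ℝ) (ε₂ : ℝ) (_ : 0 ≤ ε₁) (_ : 0 ≤ ε₂) (_ : ε₁ + ε₂ = ε),
    J2set f ε₁ u ∩ M1 (f u) ε₂ xs

/-- `I^ε(x) := {u : f_u x ≥ p x - ε}` (when `p x ∈ ℝ`). -/
def I2set (f : U → X → EReal) (ε : ℝ) (x : X) : Set U :=
  {u | (∃ r : ℝ, pSup f x = (r : EReal)) ∧ pSup f x - (ε : EReal) ≤ f u x}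

/-- `C^ε(x)` for the non-perturbation case. -/
def C2set (f : U → X → EReal) (ε : ℝ) (x : X) : Set (X →L[ℝ] ℝ) :=
  ⋂ (η : ℝ) (_ : 0 < η),
    ⋃ (ε₁ : ℝ) (ε₂ : ℝ) (_ : 0 ≤ ε₁) (_ : 0 ≤ ε₂) (_ : ε₁ + ε₂ = ε + η)
      (u : U) (_ : u ∈ I2set f ε₁ x), epsSubdiff1 (f u) ε₂ x

/-- `J(u) := {x : p x ∈ ℝ ∧ f_u x = p x}`. -/
def J02set (f : U → X → EReal) (u : U) : Set X :=
  {x | (∃ r : ℝ, pSup f x = (r : EReal)) ∧ f u x = pSup f x}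

/-- `B_u(x*) := J(u) ∩ (M f_u)(x*)`. -/
def B02set (f : U → X → EReal) (u : U) (xs : X →L[ℝ] ℝ) : Set X :=
  J02set f u ∩ M1 (f u) 0 xs

private lemma conj_pSup_le (f : U → X → EReal) (xs : X →L[ℝ] ℝ) (u : U) :
    conj1 (pSup f) xs ≤ conj1 (f u) xs :=
  iSup_mono fun x => EReal.sub_le_sub le_rfl (le_iSup (fun v => f v x) u)

private lemma pSup_ne_bot (f : U → X → EReal) (hU : Nonempty U) (hf : ∀ u x, f u x ≠ ⊥)
    (x : X) : pSup f x ≠ ⊥ := by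
  obtain ⟨u₀⟩ := hU
  exact ne_bot_of_le_ne_bot (hf u₀ x) (le_iSup (fun v => f v x) u₀)

private lemma conj_pSup_ne_bot (f : U → X → EReal) (hU : Nonempty U) (hf : ∀ u x, f u x ≠ ⊥)
    (hdomp : ∃ x : X, pSup f x ≠ ⊤) (xs : X →L[ℝ] ℝ) : conj1 (pSup f) xs ≠ ⊥ := by
  obtain ⟨x₀, hx₀⟩ := hdomp
  obtain ⟨r, hr⟩ := ereal_real_of (pSup_ne_bot f hU hf x₀) hx₀
  have h1 : ((xs x₀ - r : ℝ):EReal) ≤ conj1 (pSup f) xs := by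
    have := le_iSup (fun x => ((xs x : ℝ):EReal) - pSup f x) x₀
    rw [hr, ← EReal.coe_sub] at this
    exact this
  intro hb
  rw [hb, le_bot_iff] at h1
  exact EReal.coe_ne_bot _ h1

private lemma M_eq_B_of_conj_eq (f : U → X → EReal) (hU : Nonempty U)
    (hf : ∀ u x, f u x ≠ ⊥) (hdomp : ∃ x : X, pSup f x ≠ ⊤) (xs : X →L[ℝ] ℝ) (u : U)
    (hu : conj1 (pSup f) xs = conj1 (f u) xs) (ε : ℝ) (hε : 0 ≤ ε) :
    M1 (pSup f) ε xs = B2set f ε u xs := by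
  by_cases htop : conj1 (pSup f) xs = ⊤
  · -- both sides are empty
    have hinfp : (⨅ w, pSup f w - ((xs w : ℝ):EReal)) = ⊥ := by
      rw [ereal_iInf_sub, ← conj1, htop, EReal.neg_top]
    have hinfu : (⨅ w, f u w - ((xs w : ℝ):EReal)) = ⊥ := by
      rw [ereal_iInf_sub, ← conj1, ← hu, htop, EReal.neg_top]
    ext x
    simp only [M1, epsArgmin, Set.mem_setOf_eq, B2set, Set.mem_iUnion, J2set, Set.mem_inter_iff]
    constructor
    · rintro ⟨⟨r, hr⟩, hle⟩
      rw [hinfp, EReal.bot_add, hr, le_bot_iff] at hle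
      exact absurd hle (EReal.coe_ne_bot _)
    · rintro ⟨ε₁, ε₂, h1, h2, h3, _, ⟨r, hr⟩, hle⟩
      rw [hinfu, EReal.bot_add, hr, le_bot_iff] at hle
      exact absurd hle (EReal.coe_ne_bot _)
  · obtain ⟨c, hc⟩ := ereal_real_of (conj_pSup_ne_bot f hU hf hdomp xs) htop
    have hcu : conj1 (f u) xs = (c:EReal) := hu ▸ hc
    have hinfp : (⨅ w, pSup f w - ((xs w : ℝ):EReal)) = ((-c:ℝ):EReal) := by
      rw [ereal_iInf_sub, ← conj1, hc, ← EReal.coe_neg]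
    have hinfu : (⨅ w, f u w - ((xs w : ℝ):EReal)) = ((-c:ℝ):EReal) := by
      rw [ereal_iInf_sub, ← conj1, hcu, ← EReal.coe_neg]
    ext x
    simp only [M1, epsArgmin, Set.mem_setOf_eq, B2set, Set.mem_iUnion, J2set, Set.mem_inter_iff]
    constructor
    · rintro ⟨⟨r, hr⟩, hle⟩
      rw [hinfp, hr] at hle
      have hle' : r ≤ -c + ε := by exact_mod_cast hle
      have hpx : pSup f x = ((r + xs x : ℝ):EReal) := ereal_eq_of_sub_coe hr
      have hfut : f u x ≤ ((r + xs x : ℝ):EReal) := hpx ▸ le_iSup (fun v => f v x) u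
      obtain ⟨s, hs⟩ := ereal_real_of (hf u x) (ne_top_of_le_ne_top (EReal.coe_ne_top _) hfut)
      have hs_le : s ≤ r + xs x := by rw [hs] at hfut; exact_mod_cast hfut
      have hcs : -c ≤ s - xs x := by
        have h1 : (⨅ w, f u w - ((xs w : ℝ):EReal)) ≤ f u x - ((xs x : ℝ):EReal) := iInf_le _ x
        rw [hinfu, hs, ← EReal.coe_sub] at h1
        exact_mod_cast h1
      refine ⟨r + xs x - s, ε - (r + xs x - s), by linarith, by linarith, by ring,
        ⟨⟨r + xs x, hpx⟩, ?_⟩, ⟨s - xs x, by rw [hs, ← EReal.coe_sub]⟩, ?_⟩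
      · rw [hpx, hs, ← EReal.coe_sub]
        exact_mod_cast by linarith
      · rw [hinfu, hs, ← EReal.coe_sub, ← EReal.coe_add]
        exact_mod_cast by linarith
    · rintro ⟨ε₁, ε₂, h1, h2, h3, ⟨⟨px, hpx⟩, hJ⟩, ⟨t, ht⟩, hM⟩
      have hfu : f u x = ((t + xs x : ℝ):EReal) := ereal_eq_of_sub_coe ht
      have hJ' : px - ε₁ ≤ t + xs x := by
        rw [hpx, hfu, ← EReal.coe_sub] at hJ
        exact_mod_cast hJ
      have hM' : t ≤ -c + ε₂ := by
        rw [hinfu, ht, ← EReal.coe_add] at hM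
        exact_mod_cast hM
      refine ⟨⟨px - xs x, by rw [hpx, ← EReal.coe_sub]⟩, ?_⟩
      rw [hinfp, hpx, ← EReal.coe_sub, ← EReal.coe_add]
      exact_mod_cast by linarith

/-- Corollary 4.2 (strong robust duality for Case 2: no linear perturbations). -/
theorem strong_infSup_duality_iff_M_eq_Bset
    (f : U → X → EReal) (hU : Nonempty U) (hf : ∀ u x, f u x ≠ ⊥)
    (hdomp : ∃ x : X, pSup f x ≠ ⊤) (xs : X →L[ℝ] ℝ) :
    List.TFAE
      [∃ u : U, conj1 (pSup f) xs = conj1 (f u) xs ∧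
         conj1 (f u) xs = ⨅ v : U, conj1 (f v) xs,
       ∃ u : U, ∀ ε : ℝ, 0 ≤ ε → M1 (pSup f) ε xs = B2set f ε u xs,
       ∃ εbar : ℝ, 0 < εbar ∧ ∃ u : U,
         ∀ ε : ℝ, 0 < ε → ε < εbar → M1 (pSup f) ε xs = B2set f ε u xs] := by
  tfae_have 1 → 2
  | ⟨u, h1, _⟩ => ⟨u, fun ε hε => M_eq_B_of_conj_eq f hU hf hdomp xs u h1 ε hε⟩
  tfae_have 2 → 3
  | ⟨u, h⟩ => ⟨1, one_pos, u, fun ε hε _ => h ε hε.le⟩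
  tfae_have 3 → 1
  | ⟨εbar, hεbar, u, hMB⟩ => by
    have hple : conj1 (pSup f) xs ≤ conj1 (f u) xs := conj_pSup_le f xs u
    suffices heq : conj1 (pSup f) xs = conj1 (f u) xs by
      exact ⟨u, heq,
        le_antisymm (le_iInf fun v => heq ▸ conj_pSup_le f xs v) (iInf_le _ u)⟩
    by_cases htop : conj1 (pSup f) xs = ⊤
    · have h : conj1 (f u) xs = ⊤ := top_le_iff.mp (htop.symm.le.trans hple)
      rw [htop, h]
    obtain ⟨c, hc⟩ := ereal_real_of (conj_pSup_ne_bot f hU hf hdomp xs) htop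
    have hinfp : (⨅ w, pSup f w - ((xs w : ℝ):EReal)) = ((-c:ℝ):EReal) := by
      rw [ereal_iInf_sub, ← conj1, hc, ← EReal.coe_neg]
    have key : ∀ ε : ℝ, 0 < ε → ε < εbar → conj1 (f u) xs ≤ ((c + ε : ℝ):EReal) := by
      intro ε hε hεb
      have hlt : (⨅ w, pSup f w - ((xs w : ℝ):EReal)) < ((-c + ε : ℝ):EReal) := by
        rw [hinfp]; exact_mod_cast by linarith
      obtain ⟨x, hx⟩ := iInf_lt_iff.mp hlt
      have hxr : ∃ r : ℝ, pSup f x - ((xs x : ℝ):EReal) = (r:EReal) :=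
        ereal_real_of (ereal_sub_coe_ne_bot (pSup_ne_bot f hU hf x) _) (ne_top_of_lt hx)
      have hxM : x ∈ M1 (pSup f) ε xs := by
        refine ⟨hxr, ?_⟩
        rw [hinfp, ← EReal.coe_add]
        exact hx.le
      rw [hMB ε hε hεb] at hxM
      simp only [B2set, Set.mem_iUnion, J2set, Set.mem_inter_iff, Set.mem_setOf_eq, M1,
        epsArgmin] at hxM
      obtain ⟨ε₁, ε₂, h1, h2, h3, ⟨⟨px, hpx⟩, hJ⟩, ⟨t, ht⟩, hM⟩ := hxM
      have hfu : f u x = ((t + xs x : ℝ):EReal) := ereal_eq_of_sub_coe ht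
      have hJ' : px - ε₁ ≤ t + xs x := by
        rw [hpx, hfu, ← EReal.coe_sub] at hJ
        exact_mod_cast hJ
      rw [ht] at hM
      have h4 : ((t - ε₂ : ℝ):EReal) ≤ ⨅ w, f u w - ((xs w : ℝ):EReal) := ereal_coe_sub_le hM
      have h5 : conj1 (f u) xs ≤ ((ε₂ - t : ℝ):EReal) := by
        have hrw : conj1 (f u) xs = -(⨅ w, f u w - ((xs w : ℝ):EReal)) := by
          rw [ereal_iInf_sub, ← conj1, neg_neg]
        rw [hrw]
        rw [EReal.neg_le]
        rw [← EReal.coe_neg]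
        convert h4 using 2
        ring
      have h6 : xs x - px ≤ c := by
        have h7 : ((xs x : ℝ):EReal) - pSup f x ≤ conj1 (pSup f) xs :=
          le_iSup (fun y => ((xs y : ℝ):EReal) - pSup f y) x
        rw [hpx, hc, ← EReal.coe_sub] at h7
        exact_mod_cast h7
      calc conj1 (f u) xs ≤ ((ε₂ - t : ℝ):EReal) := h5
        _ ≤ ((c + ε : ℝ):EReal) := by exact_mod_cast by linarith
    have hfin : conj1 (f u) xs ≤ (c:EReal) := by
      by_contra hcon
      push_neg at hcon
      obtain ⟨q, hq1, hq2⟩ := EReal.lt_iff_exists_real_btwn.mp hcon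
      have hq1' : c < q := by exact_mod_cast hq1
      set ε := min ((q - c) / 2) (εbar / 2) with hεdef
      have hε0 : 0 < ε := lt_min (by linarith) (by linarith)
      have hεb : ε < εbar := lt_of_le_of_lt (min_le_right _ _) (by linarith)
      have := key ε hε0 hεb
      have hlt2 : ((c + ε : ℝ):EReal) < (q:EReal) := by
        have : ε ≤ (q - c) / 2 := min_le_left _ _
        exact_mod_cast by linarith
      exact absurd ((this.trans_lt hlt2).trans hq2) (lt_irrefl _)
    exact le_antisymm hple (hc ▸ hfin)
  tfae_finish

end RobustDuality
end
end

section
/- Let (f_u)_{u∈U} be a family of functions f_u : X → ℝ ∪ {+∞} with U nonempty, p := sup_{u∈U} f_u, and let x* ∈ X* be such that (Mp)(x*) := argmin(p − x*) is nonempty. Then the following are equivalent: (i) (sup_{u∈U} f_u)*(x*) = min_{u∈U} f_u*(x*), with attainment at the first member (i.e., the supremum defining p*(x*) is attained and the infimum over u is attained); (ii) there exists u ∈ U such that (Mp)(x*) = B_u(x*), where B_u(x*) := J(u) ∩ (Mf_u)(x*), J(u) := {x ∈ X : p(x) ∈ ℝ and f_u(x) = p(x)}, and (Mf_u)(x*)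 := argmin(f_u − x*). -/
noncomputable section

namespace RobustDuality

section Aux

lemma iSup_neg_eq_neg_iInf {ι : Sort*} (g : ι → EReal) :
    (⨆ i, -(g i)) = -(⨅ i, g i) := by
  apply le_antisymm
  · exact iSup_le fun i => EReal.neg_le_neg_iff.2 (iInf_le _ i)
  · rw [EReal.neg_le]
    exact le_iInf fun i => EReal.neg_le_of_neg_le (le_iSup (fun i => -(g i)) i)

lemma eq_coe_of_sub_coe (c : EReal) (hc : c ≠ ⊥) (t r : ℝ) (h : c - (t : ℝ) = (r : EReal)) :
    c = ((r + t : ℝ) : EReal) := by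
  induction c with
  | bot => exact absurd rfl hc
  | coe c =>
    rw [← EReal.coe_sub, EReal.coe_eq_coe_iff] at h
    rw [EReal.coe_eq_coe_iff]; linarith
  | top => simp at h

lemma sub_coe_ne_bot (c : EReal) (hc : c ≠ ⊥) (t : ℝ) : c - (t : ℝ) ≠ ⊥ := by
  induction c with
  | bot => exact absurd rfl hc
  | coe c => rw [← EReal.coe_sub]; exact EReal.coe_ne_bot _
  | top => simp

end Aux

variable {X : Type*} [AddCommGroup X] [Module ℝ X] [TopologicalSpace X]
  [IsTopologicalAddGroup X] [ContinuousSMul ℝ X] [LocallyConvexSpace ℝ X] [T2Space X]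

lemma conj1_eq_neg_iInf (h : X → EReal) (hb : ∀ x, h x ≠ ⊥) (xs : X →L[ℝ] ℝ) :
    conj1 h xs = -(⨅ x, h x - ((xs x : ℝ) : EReal)) := by
  rw [← iSup_neg_eq_neg_iInf]
  unfold conj1
  congr 1
  funext x
  rw [EReal.neg_sub (Or.inl (hb x)) (Or.inr (EReal.coe_ne_top _)), sub_eq_add_neg, add_comm]

variable {U : Type*}

/-- Corollary 5.4 (min-max robust duality for Case 2: no linear perturbations). -/
theorem minmax_infSup_duality_iff
    (f : U → X → EReal) (hU : Nonempty U) (hf : ∀ u x, f u x ≠ ⊥)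
    (xs : X →L[ℝ] ℝ) (hM : (M1 (pSup f) 0 xs).Nonempty) :
    ((∃ xbar : X, ((xs xbar : ℝ) : EReal) - pSup f xbar = conj1 (pSup f) xs) ∧
      ∃ u : U, conj1 (pSup f) xs = conj1 (f u) xs ∧
        conj1 (f u) xs = ⨅ v : U, conj1 (f v) xs) ↔
    (∃ u : U, M1 (pSup f) 0 xs = B02set f u xs) := by
  classical
  obtain ⟨u0⟩ := hU
  -- basic facts
  have hpbot : ∀ x, pSup f x ≠ ⊥ := by
    intro x hx
    exact hf u0 x (le_bot_iff.mp (hx ▸ le_iSup (fun u => f u x) u0))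
  set φ : X → EReal := fun x => pSup f x - ((xs x : ℝ) : EReal) with hφdef
  obtain ⟨a, ⟨ra, hra⟩, hale⟩ := hM
  simp only [EReal.coe_zero, add_zero] at hale
  have hinfφ : (⨅ w, φ w) = (ra : EReal) := by
    apply le_antisymm
    · calc (⨅ w, φ w) ≤ φ a := iInf_le φ a
        _ = (ra : EReal) := hra
    · calc (ra : EReal) = φ a := hra.symm
        _ ≤ ⨅ w, φ w := hale
  -- p a is real
  obtain ⟨pa, hpa⟩ : ∃ pa : ℝ, pSup f a = (pa : EReal) ∧ pa - xs a = ra := by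
    have := eq_coe_of_sub_coe (pSup f a) (hpbot a) (xs a) ra hra
    exact ⟨ra + xs a, this, by ring⟩
  -- conjugate of p
  have hconjp : conj1 (pSup f) xs = -(ra : EReal) := by
    rw [conj1_eq_neg_iInf _ hpbot, hinfφ]
  -- monotonicity: conj1 p ≤ conj1 (f u)
  have hmono : ∀ u : U, conj1 (pSup f) xs ≤ conj1 (f u) xs := by
    intro u
    exact iSup_mono fun x => EReal.sub_le_sub le_rfl (le_iSup (fun v => f v x) u)
  -- key: conj1 (f u) xs = conj1 p xs ↔ ⨅ (f u - xs) = ra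
  have hkey : ∀ u : U, conj1 (f u) xs = conj1 (pSup f) xs ↔
      (⨅ x, f u x - ((xs x : ℝ) : EReal)) = (ra : EReal) := by
    intro u
    rw [conj1_eq_neg_iInf _ (fun x => hf u x), hconjp]
    constructor
    · intro h; have := congrArg Neg.neg h; simpa using this
    · intro h; rw [h]
  constructor
  · rintro ⟨-, u, hpu, -⟩
    have hginf : (⨅ x, f u x - ((xs x : ℝ) : EReal)) = (ra : EReal) := (hkey u).mp hpu.symm
    refine ⟨u, ?_⟩
    ext x
    constructor
    · rintro ⟨⟨r, hr⟩, hle⟩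
      simp only [EReal.coe_zero, add_zero] at hle
      -- φ x = ra
      have hφx : φ x = (ra : EReal) :=
        le_antisymm (by rwa [hinfφ] at hle) (hinfφ ▸ iInf_le φ x)
      obtain ⟨px, hpx, hpxr⟩ : ∃ px : ℝ, pSup f x = (px : EReal) ∧ px - xs x = ra := by
        have := eq_coe_of_sub_coe (pSup f x) (hpbot x) (xs x) ra hφx
        exact ⟨ra + xs x, this, by ring⟩
      -- g x = ra
      have hgle : f u x - ((xs x : ℝ) : EReal) ≤ φ x :=
        EReal.sub_le_sub (le_iSup (fun v => f v x) u) le_rfl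
      have hgx : f u x - ((xs x : ℝ) : EReal) = (ra : EReal) :=
        le_antisymm (hφx ▸ hgle) (hginf ▸ iInf_le _ x)
      have hfux : f u x = ((ra + xs x : ℝ) : EReal) :=
        eq_coe_of_sub_coe (f u x) (hf u x) (xs x) ra hgx
      refine ⟨⟨⟨px, hpx⟩, ?_⟩, ⟨ra, hgx⟩, ?_⟩
      · rw [hfux, hpx, EReal.coe_eq_coe_iff]; linarith
      · simp only [EReal.coe_zero, add_zero]
        rw [hgx, hginf]
    · rintro ⟨⟨⟨px, hpx⟩, hfeq⟩, ⟨r, hr⟩, hle⟩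
      simp only [EReal.coe_zero, add_zero] at hle ⊢
      have hφeq : φ x = f u x - ((xs x : ℝ) : EReal) := by
        simp only [hφdef]; rw [hfeq]
      refine ⟨⟨r, ?_⟩, ?_⟩
      · show φ x = (r : EReal)
        rw [hφeq]; exact hr
      · show φ x ≤ (⨅ w, φ w) + ((0 : ℝ) : EReal)
        simp only [EReal.coe_zero, add_zero]
        rw [hφeq, hinfφ]
        calc f u x - ((xs x : ℝ) : EReal) ≤ ⨅ y, f u y - ((xs y : ℝ) : EReal) := hle
          _ ≤ ⨅ w, φ w := le_iInf fun w =>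
              (iInf_le _ w).trans (EReal.sub_le_sub (le_iSup (fun v => f v w) u) le_rfl)
          _ = (ra : EReal) := hinfφ
  · rintro ⟨u, hset⟩
    have ha : a ∈ B02set f u xs := by
      rw [← hset]
      refine ⟨⟨ra, hra⟩, ?_⟩
      show φ a ≤ (⨅ w, φ w) + ((0 : ℝ) : EReal)
      simpa using hale
    obtain ⟨⟨-, hfeq⟩, ⟨r, hr⟩, hle⟩ := ha
    simp only [EReal.coe_zero, add_zero] at hle
    have hga : f u a - ((xs a : ℝ) : EReal) = (ra : EReal) := by
      rw [hfeq, hpa.1, ← EReal.coe_sub, EReal.coe_eq_coe_iff]; exact hpa.2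
    have hginf : (⨅ x, f u x - ((xs x : ℝ) : EReal)) = (ra : EReal) :=
      le_antisymm (hga ▸ iInf_le _ a) (hga ▸ hle)
    have hpu : conj1 (pSup f) xs = conj1 (f u) xs := ((hkey u).mpr hginf).symm
    refine ⟨⟨a, ?_⟩, u, hpu, ?_⟩
    · rw [hpa.1, hconjp, ← EReal.coe_sub, ← EReal.coe_neg, EReal.coe_eq_coe_iff]
      linarith [hpa.2]
    · exact le_antisymm (le_iInf fun v => hpu ▸ hmono v) (iInf_le _ u)


end RobustDuality
end
end
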